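/- For every p ≥ 1 and β > 0, let Λ ⊂ ℤ² be finite with zero boundary condition, let h′ < h be integers, and let γ, γ′ be contours with Λ_γ ⊆ Λ_{γ′} ⊆ Λ and hatπ^{p,0}_Λ(C_{γ′,h′}) > 0. Then hatπ^{p,0}_Λ(C_{γ,h} | C_{γ′,h′}) ≤ exp(−β|γ|). -/

import Mathlib

open scoped BigOperators Classical

noncomputable section

namespace PSOS

/-- Sites of the square lattice `ℤ²`. -/
abbrev Site : Type := ℤ × ℤ

/-- The nearest-neighbour edges incident to `x`, each written in its normalized
(right/up oriented) form, so that every unordered pair appears in a unique way. -/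
def edgesAt (x : Site) : Finset (Site × Site) :=
  {(x, (x.1 + 1, x.2)), (x, (x.1, x.2 + 1)),
   ((x.1 - 1, x.2), x), ((x.1, x.2 - 1), x)}

/-- Nearest-neighbour edges of `ℤ²` with at least one endpoint in `Λ`,
each unordered pair appearing exactly once. -/
def edges (Λ : Finset Site) : Finset (Site × Site) := Λ.biUnion edgesAt

/-- Extension `ξ` of a configuration `η : Λ → ℤ` by the boundary condition `φ` off `Λ`. -/
def extend (Λ : Finset Site) (φ : Site → ℤ) (η : Λ → ℤ) : Site → ℤ :=
  fun x => if h : x ∈ Λ then η ⟨x, h⟩ else φ x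

/-- The `p`-SOS Hamiltonian `H^{p,φ}_Λ` on `Λ` with boundary condition `φ`. -/
def ham (p : ℝ) (Λ : Finset Site) (φ : Site → ℤ) (η : Λ → ℤ) : ℝ :=
  ∑ e ∈ edges Λ, (|extend Λ φ η e.1 - extend Λ φ η e.2| : ℝ) ^ p

/-- Boltzmann weight `exp(-β H^{p,φ}_Λ(η))`. -/
def weight (p β : ℝ) (Λ : Finset Site) (φ : Site → ℤ) (η : Λ → ℤ) : ℝ :=
  Real.exp (-β * ham p Λ φ η)

/-- Finite-volume Gibbs probability `hatπ^{p,φ}_Λ(A)` of an event `A ⊆ ℤ^Λ`. -/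
def gibbs (p β : ℝ) (Λ : Finset Site) (φ : Site → ℤ) (A : Set (Λ → ℤ)) : ℝ :=
  (∑' η : A, weight p β Λ φ η) / (∑' η : (Λ → ℤ), weight p β Λ φ η)

/-- Gibbs expectation of an observable under `hatπ^{p,φ}_Λ`. -/
def gibbsExp (p β : ℝ) (Λ : Finset Site) (φ : Site → ℤ) (f : (Λ → ℤ) → ℝ) : ℝ :=
  (∑' η : (Λ → ℤ), f η * weight p β Λ φ η) / (∑' η : (Λ → ℤ), weight p β Λ φ η)

/-- The floor event `{η : η_x ≥ 0 for all x ∈ Λ}`. -/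
def floorSet (Λ : Finset Site) : Set (Λ → ℤ) := {η | ∀ x, 0 ≤ η x}

/-- The event `{η : 0 ≤ η_x ≤ n for all x ∈ Λ}` (floor at `0`, ceiling at `n`). -/
def boxSet (Λ : Finset Site) (n : ℕ) : Set (Λ → ℤ) :=
  {η | ∀ x, 0 ≤ η x ∧ η x ≤ (n : ℤ)}

/-- `barπ^{p,0}_Λ`: the Gibbs measure with zero boundary condition conditioned
on the floor event. -/
def barGibbs (p β : ℝ) (Λ : Finset Site) (A : Set (Λ → ℤ)) : ℝ :=
  gibbs p β Λ 0 (A ∩ floorSet Λ) / gibbs p β Λ 0 (floorSet Λ)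

/-- `π^{p,0}_Λ`: the Gibbs measure with zero boundary condition conditioned on
having floor at `0` and ceiling at `n`. -/
def ceilGibbs (p β : ℝ) (Λ : Finset Site) (n : ℕ) (A : Set (Λ → ℤ)) : ℝ :=
  gibbs p β Λ 0 (A ∩ boxSet Λ n) / gibbs p β Λ 0 (boxSet Λ n)

/-- The nearest-neighbour graph on `ℤ²`. -/
def nbrGraph : SimpleGraph Site where
  Adj x y := (x.1 - y.1).natAbs + (x.2 - y.2).natAbs = 1
  symm := by constructor; intro x y hxy; (try simp only at hxy ⊢); omega
  loopless := by constructor; intro x h; (try simp only at h); omega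

/-- The four nearest neighbours of a site. -/
def nbrs (x : Site) : Finset Site :=
  {(x.1 + 1, x.2), (x.1 - 1, x.2), (x.1, x.2 + 1), (x.1, x.2 - 1)}

/-- A contour `γ` of the dual lattice `(ℤ²)*`, identified with the finite region
`Λ_γ ⊆ ℤ²` of sites it encloses: the region is nonempty and connected with
connected complement, so that its edge boundary is a single closed dual circuit
(consistently with the standard linking rule at dual vertices). -/
structure Contour where
  interior : Finset Site
  nonempty : interior.Nonempty
  conn : (nbrGraph.induce (interior : Set Site)).Connected
  coconn : (nbrGraph.induce ((interior : Set Site)ᶜ)).Connected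

/-- The nearest-neighbour edges crossing the boundary of `S`, oriented from
inside to outside; these correspond to the bonds of the dual circuit bounding `S`. -/
def bdryEdges (S : Finset Site) : Finset (Site × Site) :=
  S.biUnion fun x => ((nbrs x).filter fun y => y ∉ S).image fun y => (x, y)

/-- `|γ|`: the number of bonds of the contour `γ`. -/
def Contour.len (γ : Contour) : ℕ := (bdryEdges γ.interior).card

/-- `∂⁺_γ`: sites of the interior adjacent to the exterior. -/
def innerBdry (S : Finset Site) : Finset Site :=
  S.filter fun x => ∃ y ∈ nbrs x, y ∉ S

/-- `∂⁻_γ`: sites of the exterior adjacent to the interior. -/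
def outerBdry (S : Finset Site) : Finset Site :=
  (S.biUnion nbrs).filter fun y => y ∉ S

/-- The event `C_{γ,h}` that `γ` is an `h`-contour: the extended configuration `ξ`
is at least `h` on `∂⁺_γ` and at most `h - 1` on `∂⁻_γ`. -/
def contourEvent (Λ : Finset Site) (φ : Site → ℤ) (γ : Contour) (h : ℤ) :
    Set (Λ → ℤ) :=
  {η | (∀ x ∈ innerBdry γ.interior, h ≤ extend Λ φ η x) ∧
       (∀ y ∈ outerBdry γ.interior, extend Λ φ η y ≤ h - 1)}

/-- The map `T_γ` lowering the configuration by `1` inside the contour `γ`. -/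
def lower (Λ : Finset Site) (γ : Contour) (η : Λ → ℤ) : Λ → ℤ :=
  fun x => if (x : Site) ∈ γ.interior then η x - 1 else η x

/-- An event is increasing if it is upward closed for the pointwise order. -/
def IncrEvent (Λ : Finset Site) (E : Set (Λ → ℤ)) : Prop :=
  ∀ η η' : Λ → ℤ, (∀ x, η x ≤ η' x) → η ∈ E → η' ∈ E


section Aux

lemma mem_nbrs {x y : Site} :
    y ∈ nbrs x ↔ y = (x.1 + 1, x.2) ∨ y = (x.1 - 1, x.2) ∨
      y = (x.1, x.2 + 1) ∨ y = (x.1, x.2 - 1) := by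
  simp [nbrs]

lemma mem_edges {Λ : Finset Site} {e : Site × Site} :
    e ∈ edges Λ ↔ (e.1 ∈ Λ ∨ e.2 ∈ Λ) ∧
      (e.2 = (e.1.1 + 1, e.1.2) ∨ e.2 = (e.1.1, e.1.2 + 1)) := by
  obtain ⟨⟨a1, a2⟩, ⟨b1, b2⟩⟩ := e
  simp only [edges, Finset.mem_biUnion, edgesAt, Finset.mem_insert,
    Finset.mem_singleton]
  constructor
  · rintro ⟨⟨x1, x2⟩, hx, he⟩
    simp only [Prod.mk.injEq] at he
    rcases he with ⟨⟨h1, h2⟩, h3, h4⟩ | ⟨⟨h1, h2⟩, h3, h4⟩ |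
        ⟨⟨h1, h2⟩, h3, h4⟩ | ⟨⟨h1, h2⟩, h3, h4⟩ <;>
      subst h1 <;> subst h2 <;> subst h3 <;> subst h4 <;>
      refine ⟨?_, ?_⟩ <;>
      first
        | exact Or.inl hx
        | exact Or.inr hx
        | (simp only [Prod.mk.injEq, true_and, and_true, true_or, or_true]; try omega)
  · rintro ⟨hmem, hform⟩
    rcases hmem with ha | hb
    · refine ⟨(a1, a2), ha, ?_⟩
      simp only [Prod.mk.injEq, true_and, and_true] at hform ⊢
      omega
    · refine ⟨(b1, b2), hb, ?_⟩
      simp only [Prod.mk.injEq, true_and, and_true] at hform ⊢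
      omega

lemma mem_bdryEdges {S : Finset Site} {e : Site × Site} :
    e ∈ bdryEdges S ↔ e.1 ∈ S ∧ e.2 ∈ nbrs e.1 ∧ e.2 ∉ S := by
  obtain ⟨a, b⟩ := e
  simp only [bdryEdges, Finset.mem_biUnion, Finset.mem_image, Finset.mem_filter]
  constructor
  · rintro ⟨x, hx, y, ⟨hy, hyS⟩, hxy⟩
    rw [Prod.ext_iff] at hxy
    obtain ⟨h1, h2⟩ := hxy
    subst h1; subst h2
    exact ⟨hx, hy, hyS⟩
  · rintro ⟨ha, hb, hbS⟩
    exact ⟨a, ha, b, ⟨hb, hbS⟩, rfl⟩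

lemma mem_innerBdry {S : Finset Site} {x : Site} :
    x ∈ innerBdry S ↔ x ∈ S ∧ ∃ y ∈ nbrs x, y ∉ S := by
  simp [innerBdry]

lemma mem_outerBdry {S : Finset Site} {y : Site} :
    y ∈ outerBdry S ↔ (∃ x ∈ S, y ∈ nbrs x) ∧ y ∉ S := by
  simp [outerBdry]

lemma nbrs_symm {x y : Site} (h : y ∈ nbrs x) : x ∈ nbrs y := by
  obtain ⟨x1, x2⟩ := x
  obtain ⟨y1, y2⟩ := y
  rw [mem_nbrs] at h ⊢
  simp only [Prod.mk.injEq, true_and, and_true] at h ⊢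
  omega

/-- The normalization of an oriented nearest-neighbour edge. -/
def normEdge (e : Site × Site) : Site × Site :=
  if e.2 = (e.1.1 + 1, e.1.2) ∨ e.2 = (e.1.1, e.1.2 + 1) then e else (e.2, e.1)

lemma cast_abs_sub (a b : ℤ) : |(a : ℝ) - (b : ℝ)| = ((|a - b| : ℤ) : ℝ) := by
  rw [Int.cast_abs, Int.cast_sub]

lemma rpow_sub_one_add_one_le {p t : ℝ} (hp : 1 ≤ p) (ht : 1 ≤ t) :
    (t - 1) ^ p + 1 ≤ t ^ p := by
  have h0 : (0 : ℝ) ≤ t - 1 := by linarith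
  have h := NNReal.add_rpow_le_rpow_add (Real.toNNReal (t - 1)) 1 hp
  have h' := NNReal.coe_le_coe.mpr h
  push_cast at h'
  rw [Real.coe_toNNReal _ h0] at h'
  have ht' : t - 1 + 1 = t := by ring
  simp only [Real.one_rpow, ht'] at h'
  exact h'

lemma extend_lower (Λ : Finset Site) (γ : Contour) (hsub : γ.interior ⊆ Λ)
    (η : Λ → ℤ) (x : Site) :
    extend Λ 0 (lower Λ γ η) x
      = extend Λ 0 η x - (if x ∈ γ.interior then 1 else 0) := by
  unfold extend lower
  by_cases hx : x ∈ Λ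
  · simp only [hx, dif_pos]
    split_ifs <;> ring
  · have : x ∉ γ.interior := fun hc => hx (hsub hc)
    simp [hx, this]

lemma lower_injective (Λ : Finset Site) (γ : Contour) :
    Function.Injective (lower Λ γ) := by
  intro a b hab
  funext x
  have := congrFun hab x
  unfold lower at this
  by_cases hx : (x : Site) ∈ γ.interior <;> simp [hx] at this <;> omega

/-- The crossing edges of `γ` inside `edges Λ`. -/
def crossEdges (Λ : Finset Site) (γ : Contour) : Finset (Site × Site) :=
  (edges Λ).filter fun e =>
    (e.1 ∈ γ.interior ∧ e.2 ∉ γ.interior) ∨ (e.1 ∉ γ.interior ∧ e.2 ∈ γ.interior)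

lemma card_crossEdges (Λ : Finset Site) (γ : Contour)
    (hsub : γ.interior ⊆ Λ) : (crossEdges Λ γ).card = γ.len := by
  classical
  unfold Contour.len
  symm
  apply Finset.card_bij (fun e _ => normEdge e)
  · -- maps into crossEdges
    intro e he
    rw [mem_bdryEdges] at he
    obtain ⟨h1, h2, h3⟩ := he
    unfold normEdge
    split_ifs with hcond
    · rw [crossEdges, Finset.mem_filter, mem_edges]
      exact ⟨⟨Or.inl (hsub h1), hcond⟩, Or.inl ⟨h1, h3⟩⟩
    · rw [crossEdges, Finset.mem_filter, mem_edges]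
      refine ⟨⟨Or.inr (hsub h1), ?_⟩, Or.inr ⟨h3, h1⟩⟩
      -- e.2 ∈ nbrs e.1 but not right/up, so e.1 is right/up of e.2
      rw [mem_nbrs] at h2
      rcases h2 with h2 | h2 | h2 | h2
      · exact absurd (Or.inl h2) hcond
      · left; rw [Prod.ext_iff] at h2 ⊢; simp [h2.1, h2.2]
      · exact absurd (Or.inr h2) hcond
      · right; rw [Prod.ext_iff] at h2 ⊢; simp [h2.1, h2.2]
  · -- injective
    intro e he e' he' heq
    rw [mem_bdryEdges] at he he'
    unfold normEdge at heq
    split_ifs at heq with hc hc' hc'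
    · exact heq
    · exfalso
      have h1 : e.1 = e'.2 := congrArg Prod.fst heq
      exact he'.2.2 (h1 ▸ he.1)
    · exfalso
      have h1 : e.2 = e'.1 := congrArg Prod.fst heq
      exact he.2.2 (h1 ▸ he'.1)
    · have h1 : e.2 = e'.2 := congrArg Prod.fst heq
      have h2 : e.1 = e'.1 := congrArg Prod.snd heq
      exact Prod.ext_iff.mpr ⟨h2, h1⟩
  · -- surjective
    intro e he
    rw [crossEdges, Finset.mem_filter, mem_edges] at he
    obtain ⟨⟨hmem, hform⟩, hcross⟩ := he
    have hnbr : e.2 ∈ nbrs e.1 := by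
      rw [mem_nbrs]
      rcases hform with hf | hf
      · exact Or.inl hf
      · exact Or.inr (Or.inr (Or.inl hf))
    rcases hcross with ⟨h1, h2⟩ | ⟨h1, h2⟩
    · refine ⟨e, ?_, ?_⟩
      · rw [mem_bdryEdges]; exact ⟨h1, hnbr, h2⟩
      · unfold normEdge; rw [if_pos hform]
    · refine ⟨(e.2, e.1), ?_, ?_⟩
      · rw [mem_bdryEdges]; exact ⟨h2, nbrs_symm hnbr, h1⟩
      · unfold normEdge
        have : ¬((e.2, e.1).2 = ((e.2, e.1).1.1 + 1, (e.2, e.1).1.2) ∨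
            (e.2, e.1).2 = ((e.2, e.1).1.1, (e.2, e.1).1.2 + 1)) := by
          simp only
          rcases hform with hf | hf <;> rw [Prod.ext_iff] at hf <;>
            rintro (hc | hc) <;> rw [Prod.ext_iff] at hc <;> omega
        rw [if_neg this]

lemma ham_lower_le {p : ℝ} (hp : 1 ≤ p) (Λ : Finset Site) (γ : Contour)
    (h : ℤ) (hsub : γ.interior ⊆ Λ) (η : Λ → ℤ)
    (hη : η ∈ contourEvent Λ 0 γ h) :
    ham p Λ 0 (lower Λ γ η) + (γ.len : ℝ) ≤ ham p Λ 0 η := by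
  classical
  obtain ⟨hin, hout⟩ := hη
  set ξ : Site → ℤ := extend Λ 0 η with hξ
  have hstep : ∀ e ∈ edges Λ,
      (|extend Λ 0 (lower Λ γ η) e.1 - extend Λ 0 (lower Λ γ η) e.2| : ℝ) ^ p
        + (if e ∈ crossEdges Λ γ then (1 : ℝ) else 0)
      ≤ (|ξ e.1 - ξ e.2| : ℝ) ^ p := by
    intro e he
    rw [extend_lower Λ γ hsub, extend_lower Λ γ hsub]
    have hnbr : e.2 ∈ nbrs e.1 := by
      rw [mem_edges] at he
      rw [mem_nbrs]
      rcases he.2 with hf | hf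
      · exact Or.inl hf
      · exact Or.inr (Or.inr (Or.inl hf))
    by_cases h1 : e.1 ∈ γ.interior <;> by_cases h2 : e.2 ∈ γ.interior
    · have hnc : e ∉ crossEdges Λ γ := by
        rw [crossEdges, Finset.mem_filter]
        rintro ⟨-, ⟨-, hc⟩ | ⟨hc, -⟩⟩
        · exact hc h2
        · exact hc h1
      rw [if_pos h1, if_pos h2, if_neg hnc, add_zero, cast_abs_sub, cast_abs_sub]
      have harg : ξ e.1 - 1 - (ξ e.2 - 1) = ξ e.1 - ξ e.2 := by ring
      rw [harg]
    · have hcross : e ∈ crossEdges Λ γ := by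
        rw [crossEdges, Finset.mem_filter]
        exact ⟨he, Or.inl ⟨h1, h2⟩⟩
      have hxin : e.1 ∈ innerBdry γ.interior := by
        rw [mem_innerBdry]; exact ⟨h1, e.2, hnbr, h2⟩
      have hyout : e.2 ∈ outerBdry γ.interior := by
        rw [mem_outerBdry]; exact ⟨⟨e.1, h1, hnbr⟩, h2⟩
      have ha : h ≤ ξ e.1 := hin _ hxin
      have hb : ξ e.2 ≤ h - 1 := hout _ hyout
      have hk : (1 : ℤ) ≤ ξ e.1 - ξ e.2 := by omega
      rw [if_pos h1, if_neg h2, if_pos hcross, cast_abs_sub, cast_abs_sub]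
      have e1 : |ξ e.1 - 1 - (ξ e.2 - 0)| = ξ e.1 - ξ e.2 - 1 := by
        rw [abs_of_nonneg (by omega)]; ring
      have e2 : |ξ e.1 - ξ e.2| = ξ e.1 - ξ e.2 := abs_of_nonneg (by omega)
      rw [e1, e2]
      have hcast : (1 : ℝ) ≤ ((ξ e.1 - ξ e.2 : ℤ) : ℝ) := by exact_mod_cast hk
      have hmain := rpow_sub_one_add_one_le (t := ((ξ e.1 - ξ e.2 : ℤ) : ℝ)) hp hcast
      push_cast
      push_cast at hmain
      linarith
    · have hcross : e ∈ crossEdges Λ γ := by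
        rw [crossEdges, Finset.mem_filter]
        exact ⟨he, Or.inr ⟨h1, h2⟩⟩
      have hxin : e.2 ∈ innerBdry γ.interior := by
        rw [mem_innerBdry]; exact ⟨h2, e.1, nbrs_symm hnbr, h1⟩
      have hyout : e.1 ∈ outerBdry γ.interior := by
        rw [mem_outerBdry]; exact ⟨⟨e.2, h2, nbrs_symm hnbr⟩, h1⟩
      have ha : h ≤ ξ e.2 := hin _ hxin
      have hb : ξ e.1 ≤ h - 1 := hout _ hyout
      have hk : (1 : ℤ) ≤ ξ e.2 - ξ e.1 := by omega
      rw [if_neg h1, if_pos h2, if_pos hcross, cast_abs_sub, cast_abs_sub]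
      have e1 : |ξ e.1 - 0 - (ξ e.2 - 1)| = ξ e.2 - ξ e.1 - 1 := by
        rw [abs_of_nonpos (by omega)]; ring
      have e2 : |ξ e.1 - ξ e.2| = ξ e.2 - ξ e.1 := by
        rw [abs_of_nonpos (by omega)]; ring
      rw [e1, e2]
      have hcast : (1 : ℝ) ≤ ((ξ e.2 - ξ e.1 : ℤ) : ℝ) := by exact_mod_cast hk
      have hmain := rpow_sub_one_add_one_le (t := ((ξ e.2 - ξ e.1 : ℤ) : ℝ)) hp hcast
      push_cast
      push_cast at hmain
      linarith
    · have hnc : e ∉ crossEdges Λ γ := by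
        rw [crossEdges, Finset.mem_filter]
        rintro ⟨-, ⟨hc, -⟩ | ⟨-, hc⟩⟩
        · exact h1 hc
        · exact h2 hc
      rw [if_neg h1, if_neg h2, if_neg hnc, add_zero, cast_abs_sub, cast_abs_sub]
      have harg : ξ e.1 - 0 - (ξ e.2 - 0) = ξ e.1 - ξ e.2 := by ring
      rw [harg]
  have hsum := Finset.sum_le_sum hstep
  rw [Finset.sum_add_distrib] at hsum
  have hcount : (∑ e ∈ edges Λ, (if e ∈ crossEdges Λ γ then (1 : ℝ) else 0))
      = (γ.len : ℝ) := by
    rw [Finset.sum_ite_mem]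
    have hinter : edges Λ ∩ crossEdges Λ γ = crossEdges Λ γ :=
      Finset.inter_eq_right.mpr (Finset.filter_subset _ _)
    rw [hinter, Finset.sum_const, nsmul_eq_mul, mul_one, card_crossEdges Λ γ hsub]
  rw [hcount] at hsum
  exact hsum

end Aux

/-- conditional Peierls bound: for `h' < h` and nested contours
`Λ_γ ⊆ Λ_{γ'} ⊆ Λ`, `hatπ^{p,0}_Λ(C_{γ,h} | C_{γ',h'}) ≤ exp(-β|γ|)`. -/
theorem statement_2 (p β : ℝ) (hp : 1 ≤ p) (hβ : 0 < β)
    (Λ : Finset Site) (γ γ' : Contour) (h h' : ℤ) (hh : h' < h)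
    (hsub : γ.interior ⊆ γ'.interior) (hsub' : γ'.interior ⊆ Λ)
    (hpos : 0 < gibbs p β Λ 0 (contourEvent Λ 0 γ' h')) :
    gibbs p β Λ 0 (contourEvent Λ 0 γ h ∩ contourEvent Λ 0 γ' h') /
        gibbs p β Λ 0 (contourEvent Λ 0 γ' h')
      ≤ Real.exp (-β * (γ.len : ℝ)) := by
  classical
  have hgsub : γ.interior ⊆ Λ := hsub.trans hsub'
  simp only [gibbs] at hpos ⊢
  set A := contourEvent Λ 0 γ h with hA
  set B := contourEvent Λ 0 γ' h' with hB
  set w : (Λ → ℤ) → ℝ := weight p β Λ 0 with hw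
  have hwpos : ∀ η, 0 < w η := fun η => Real.exp_pos _
  set Z : ℝ := ∑' η : (Λ → ℤ), w η with hZ
  have hZne : Z ≠ 0 := by
    intro h0
    rw [h0, div_zero] at hpos
    exact lt_irrefl 0 hpos
  have hsummable : Summable w := by
    by_contra hs
    exact hZne (tsum_eq_zero_of_not_summable hs)
  have hZpos : 0 < Z := lt_of_le_of_ne (tsum_nonneg fun η => (hwpos η).le) (Ne.symm hZne)
  have hNBpos : 0 < ∑' η : B, w η := by
    have h1 := mul_pos hpos hZpos
    rwa [div_mul_cancel₀ _ hZne] at h1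
  -- the lowering map sends A ∩ B into B
  have hmap : ∀ η : (Λ → ℤ), η ∈ A ∩ B → lower Λ γ η ∈ B := by
    rintro η ⟨hηA, hηB⟩
    refine ⟨?_, ?_⟩
    · intro x hx
      rw [extend_lower Λ γ hgsub]
      by_cases hxγ : x ∈ γ.interior
      · have hxin : x ∈ innerBdry γ.interior := by
          rw [mem_innerBdry] at hx ⊢
          obtain ⟨hx1, y, hy, hyS⟩ := hx
          exact ⟨hxγ, y, hy, fun hc' => hyS (hsub hc')⟩
        have h1 := hηA.1 x hxin
        rw [if_pos hxγ]
        omega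
      · have h1 := hηB.1 x hx
        rw [if_neg hxγ]
        omega
    · intro y hy
      rw [extend_lower Λ γ hgsub]
      rw [mem_outerBdry] at hy
      have hyγ : y ∉ γ.interior := fun hc' => hy.2 (hsub hc')
      have h1 := hηB.2 y (by rw [mem_outerBdry]; exact hy)
      rw [if_neg hyγ]
      omega
  set c : ℝ := Real.exp (β * (γ.len : ℝ)) with hc
  have hcpos : 0 < c := Real.exp_pos _
  -- per-configuration energy estimate
  have hkey : ∀ η : (Λ → ℤ), η ∈ A → c * w η ≤ w (lower Λ γ η) := by
    intro η hηA
    have hham := ham_lower_le hp Λ γ h hgsub η hηA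
    rw [hw, hc]
    unfold weight
    rw [← Real.exp_add]
    apply Real.exp_le_exp.mpr
    have h2 : ham p Λ 0 (lower Λ γ η) ≤ ham p Λ 0 η - (γ.len : ℝ) := by linarith
    have h3 := mul_le_mul_of_nonpos_left h2 (by linarith : -β ≤ 0)
    nlinarith
  -- compare the two sums via the injection
  have hi : ∀ η : ↥(A ∩ B), lower Λ γ (η : Λ → ℤ) ∈ B := fun η => hmap η η.2
  have hiinj : Function.Injective (fun η : ↥(A ∩ B) => (⟨lower Λ γ η, hi η⟩ : ↥B)) := by
    intro a b hab
    apply Subtype.ext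
    exact lower_injective Λ γ (Subtype.ext_iff.mp hab)
  have htsum : (∑' η : ↥(A ∩ B), c * w η) ≤ ∑' η : ↥B, w η := by
    apply Summable.tsum_le_tsum_of_inj _ hiinj
    · intro b _
      exact (hwpos b).le
    · intro η
      exact hkey η η.2.1
    · exact (hsummable.mul_left c).subtype _
    · exact hsummable.subtype _
  rw [tsum_mul_left] at htsum
  have hNABnn : 0 ≤ ∑' η : ↥(A ∩ B), w η := tsum_nonneg fun η => (hwpos η).le
  have heq : (∑' η : ↥(A ∩ B), w η) / Z / ((∑' η : ↥B, w η) / Z)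
      = (∑' η : ↥(A ∩ B), w η) / (∑' η : ↥B, w η) := by
    field_simp
  rw [heq, div_le_iff₀ hNBpos]
  have hexp : Real.exp (-β * (γ.len : ℝ)) = c⁻¹ := by
    rw [hc, ← Real.exp_neg]
    congr 1
    ring
  rw [hexp, inv_mul_eq_div, le_div_iff₀ hcpos]
  calc (∑' η : ↥(A ∩ B), w η) * c = c * (∑' η : ↥(A ∩ B), w η) := by ring
    _ ≤ ∑' η : ↥B, w η := htsum

end PSOS
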